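/- The function y ↦ −(1/θ)·Σⱼ log σ(θ·uⱼ·(−cⱼ − (Aᵀy)ⱼ)) − bᵀy is convex on ℝᵐ. Moreover, if A has full row rank, it is strictly convex. -/
import Mathlib

open Matrix

noncomputable def sigmoid (t : ℝ) : ℝ := 1 / (1 + Real.exp (-t))

lemma one_add_exp_pos (t : ℝ) : (0:ℝ) < 1 + Real.exp t := by positivity

lemma g_hasDeriv (t : ℝ) :
    HasDerivAt (fun s => Real.log (1 + Real.exp s)) (Real.exp t / (1 + Real.exp t)) t := by
  have h : HasDerivAt (fun s => 1 + Real.exp s) (Real.exp t) t :=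
    (Real.hasDerivAt_exp t).const_add 1
  exact h.log (ne_of_gt (one_add_exp_pos t))

lemma g_strictConvex :
    StrictConvexOn ℝ Set.univ (fun t : ℝ => Real.log (1 + Real.exp t)) := by
  apply strictConvexOn_univ_of_deriv2_pos
  · exact (continuous_const.add Real.continuous_exp).log (fun t => ne_of_gt (one_add_exp_pos t))
  · intro t
    have hd1 : deriv (fun s => Real.log (1 + Real.exp s)) =
        fun s => Real.exp s / (1 + Real.exp s) := by
      funext s; exact (g_hasDeriv s).deriv
    have hdd : HasDerivAt (fun s => Real.exp s / (1 + Real.exp s))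
        ((Real.exp t * (1 + Real.exp t) - Real.exp t * Real.exp t) / (1 + Real.exp t)^2) t := by
      exact (Real.hasDerivAt_exp t).div ((Real.hasDerivAt_exp t).const_add 1)
        (ne_of_gt (one_add_exp_pos t))
    simp only [Function.iterate_succ, Function.iterate_zero, Function.comp_apply, Function.id_def]
    rw [hd1, hdd.deriv]
    have h1 : Real.exp t * (1 + Real.exp t) - Real.exp t * Real.exp t = Real.exp t := by ring
    rw [h1]
    positivity

lemma log_sigmoid (s : ℝ) : Real.log (sigmoid s) = -Real.log (1 + Real.exp (-s)) := by
  rw [sigmoid, one_div, Real.log_inv]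

theorem neg_dual_convex (m n : ℕ) (A : Matrix (Fin m) (Fin n) ℝ)
    (b : Fin m → ℝ) (c u : Fin n → ℝ) (θ : ℝ) (hθ : 0 < θ) (hu : ∀ j, 0 < u j) :
    ConvexOn ℝ Set.univ (fun y : Fin m → ℝ =>
      -(1/θ) * ∑ j, Real.log (sigmoid (θ * u j * (-c j - A.transpose.mulVec y j)))
        - b ⬝ᵥ y) ∧
    (A.rank = m → StrictConvexOn ℝ Set.univ (fun y : Fin m → ℝ =>
      -(1/θ) * ∑ j, Real.log (sigmoid (θ * u j * (-c j - A.transpose.mulVec y j)))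
        - b ⬝ᵥ y)) := by
  set g : ℝ → ℝ := fun t => Real.log (1 + Real.exp t) with hg
  set t : Fin n → (Fin m → ℝ) → ℝ :=
    fun j y => θ * u j * (c j + A.transpose.mulVec y j) with ht
  have hfun : (fun y : Fin m → ℝ =>
      -(1/θ) * ∑ j, Real.log (sigmoid (θ * u j * (-c j - A.transpose.mulVec y j)))
        - b ⬝ᵥ y)
      = fun y => (1/θ) * ∑ j, g (t j y) - b ⬝ᵥ y := by
    funext y
    have h1 : ∀ j ∈ Finset.univ, Real.log (sigmoid (θ * u j * (-c j - A.transpose.mulVec y j)))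
        = -g (t j y) := by
      intro j _
      rw [log_sigmoid, hg, ht]
      congr 3
      ring
    rw [Finset.sum_congr rfl h1, Finset.sum_neg_distrib]
    ring
  have haff : ∀ (x y : Fin m → ℝ) (a b' : ℝ), a + b' = 1 → ∀ j,
      t j (a • x + b' • y) = a * t j x + b' * t j y := by
    intro x y a b' hab j
    have h2 : A.transpose.mulVec (a • x + b' • y) j
        = a * A.transpose.mulVec x j + b' * A.transpose.mulVec y j := by
      rw [Matrix.mulVec_add, Matrix.mulVec_smul, Matrix.mulVec_smul]
      simp [smul_eq_mul]
    have hb : b' = 1 - a := by linarith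
    subst hb
    rw [ht]; simp only
    rw [h2]; ring
  have hdot : ∀ (x y : Fin m → ℝ) (a b' : ℝ),
      b ⬝ᵥ (a • x + b' • y) = a * (b ⬝ᵥ x) + b' * (b ⬝ᵥ y) := by
    intro x y a b'
    rw [dotProduct_add, dotProduct_smul, dotProduct_smul, smul_eq_mul, smul_eq_mul]
  have gconv := g_strictConvex.convexOn
  rw [hfun]
  constructor
  · refine ⟨convex_univ, ?_⟩
    intro x _ y _ a b' ha hb' hab
    simp only
    have hterm : ∀ j ∈ Finset.univ, g (t j (a • x + b' • y)) ≤ a * g (t j x) + b' * g (t j y) := by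
      intro j _
      rw [haff x y a b' hab j]
      have := gconv.2 (Set.mem_univ (t j x)) (Set.mem_univ (t j y)) ha hb' hab
      simpa [smul_eq_mul] using this
    have hsum : ∑ j, g (t j (a • x + b' • y)) ≤ a * (∑ j, g (t j x)) + b' * (∑ j, g (t j y)) := by
      calc ∑ j, g (t j (a • x + b' • y)) ≤ ∑ j, (a * g (t j x) + b' * g (t j y)) :=
            Finset.sum_le_sum hterm
        _ = a * (∑ j, g (t j x)) + b' * (∑ j, g (t j y)) := by
            rw [Finset.sum_add_distrib, Finset.mul_sum, Finset.mul_sum]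
    have hθ' : (0:ℝ) ≤ 1/θ := by positivity
    have := mul_le_mul_of_nonneg_left hsum hθ'
    rw [hdot x y a b']
    simp only [smul_eq_mul]
    nlinarith [this]
  · intro hrank
    have hinj : Function.Injective A.transpose.mulVecLin := by
      rw [← LinearMap.ker_eq_bot]
      have h1 : A.transpose.rank = m := by rw [Matrix.rank_transpose]; exact hrank
      have h2 := LinearMap.finrank_range_add_finrank_ker A.transpose.mulVecLin
      have h3 : Module.finrank ℝ (Fin m → ℝ) = m := by simp
      rw [h3] at h2
      have h4 : Module.finrank ℝ (LinearMap.range A.transpose.mulVecLin) = m := h1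
      have h5 : Module.finrank ℝ (LinearMap.ker A.transpose.mulVecLin) = 0 := by omega
      exact Submodule.finrank_eq_zero.mp h5
    refine ⟨convex_univ, ?_⟩
    intro x _ y _ hxy a b' ha hb' hab
    simp only
    have hMne : A.transpose.mulVec x ≠ A.transpose.mulVec y := by
      intro h
      apply hxy
      apply hinj
      simp only [Matrix.mulVecLin_apply]
      exact h
    obtain ⟨j₀, hj₀⟩ := Function.ne_iff.mp hMne
    have htne : t j₀ x ≠ t j₀ y := by
      rw [ht]; simp only
      intro h
      apply hj₀
      have hne : θ * u j₀ ≠ 0 := ne_of_gt (mul_pos hθ (hu j₀))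
      have := mul_left_cancel₀ hne h
      linarith
    have hterm : ∀ j ∈ Finset.univ, g (t j (a • x + b' • y)) ≤ a * g (t j x) + b' * g (t j y) := by
      intro j _
      rw [haff x y a b' hab j]
      have := gconv.2 (Set.mem_univ (t j x)) (Set.mem_univ (t j y)) (le_of_lt ha) (le_of_lt hb') hab
      simpa [smul_eq_mul] using this
    have hstrict : g (t j₀ (a • x + b' • y)) < a * g (t j₀ x) + b' * g (t j₀ y) := by
      rw [haff x y a b' hab j₀]
      have := g_strictConvex.2 (Set.mem_univ (t j₀ x)) (Set.mem_univ (t j₀ y)) htne ha hb' hab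
      simpa [smul_eq_mul] using this
    have hsum : ∑ j, g (t j (a • x + b' • y)) < a * (∑ j, g (t j x)) + b' * (∑ j, g (t j y)) := by
      calc ∑ j, g (t j (a • x + b' • y)) < ∑ j, (a * g (t j x) + b' * g (t j y)) :=
            Finset.sum_lt_sum hterm ⟨j₀, Finset.mem_univ j₀, hstrict⟩
        _ = a * (∑ j, g (t j x)) + b' * (∑ j, g (t j y)) := by
            rw [Finset.sum_add_distrib, Finset.mul_sum, Finset.mul_sum]
    have hθ' : (0:ℝ) < 1/θ := by positivity
    have := mul_lt_mul_of_pos_left hsum hθ'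
    rw [hdot x y a b']
    simp only [smul_eq_mul]
    nlinarith [this]
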